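/- Fix γ > 0 and t > 0 with t ≠ 1. For the focal loss with parameter γ, the f-function f^π(t) = L̄(π) − (πt+1−π)·L̄(πt/(πt+1−π)) satisfies lim_{π→0⁺} f^π(t) / (−(1/(γ+1)) π log(π)(1−t)) = 1; that is, −(1/(γ+1)) π log(π)(1−t) is the f-function of focal loss under ultra-imbalanced classification. -/

import Mathlib

open Filter Topology

/-- The pointwise risk of the focal loss with parameter `γ` at class
probability `η` and prediction `v`:
`-η log(v) (1-v)^γ - (1-η) log(1-v) v^γ`. -/
noncomputable def focalPointwiseRisk (γ η v : ℝ) : ℝ :=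
  -η * Real.log v * (1 - v) ^ γ - (1 - η) * Real.log (1 - v) * v ^ γ

/-- Pointwise Bayes risk of the focal loss: infimum of the pointwise risk
over predictions in `(0,1)`. -/
noncomputable def focalBayesRisk (γ η : ℝ) : ℝ :=
  sInf (focalPointwiseRisk γ η '' Set.Ioo (0 : ℝ) 1)

/-- The f-function of a loss with pointwise Bayes risk `L` at prior `π`:
`f^π(t) = L(π) - (π t + 1 - π) · L(π t / (π t + 1 - π))`. -/
noncomputable def fFun (L : ℝ → ℝ) (π t : ℝ) : ℝ :=
  L π - (π * t + 1 - π) * L (π * t / (π * t + 1 - π))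

lemma focal_risk_nonneg {γ η v : ℝ} (hη0 : 0 ≤ η) (hη1 : η ≤ 1)
    (hv : v ∈ Set.Ioo (0:ℝ) 1) : 0 ≤ focalPointwiseRisk γ η v := by
  obtain ⟨hv0, hv1⟩ := hv
  have h1 : Real.log v ≤ 0 := Real.log_nonpos hv0.le hv1.le
  have h2 : Real.log (1 - v) ≤ 0 := Real.log_nonpos (by linarith) (by linarith)
  have p1 : (0:ℝ) ≤ (1 - v) ^ γ := Real.rpow_nonneg (by linarith) γ
  have p2 : (0:ℝ) ≤ v ^ γ := Real.rpow_nonneg hv0.le γ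
  have A : 0 ≤ (η * (-Real.log v)) * (1 - v) ^ γ :=
    mul_nonneg (mul_nonneg hη0 (by linarith)) p1
  have B : 0 ≤ ((1 - η) * (-Real.log (1 - v))) * v ^ γ :=
    mul_nonneg (mul_nonneg (by linarith) (by linarith)) p2
  unfold focalPointwiseRisk
  nlinarith

lemma focal_bddBelow {γ η : ℝ} (hη0 : 0 ≤ η) (hη1 : η ≤ 1) :
    BddBelow (focalPointwiseRisk γ η '' Set.Ioo (0:ℝ) 1) := by
  refine ⟨0, ?_⟩
  rintro x ⟨v, hv, rfl⟩
  exact focal_risk_nonneg hη0 hη1 hv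

lemma focalBayesRisk_le {γ η : ℝ} (hγ : 0 < γ) (hη : η ∈ Set.Ioo (0:ℝ) 1) :
    focalBayesRisk γ η ≤
      -(1/(γ+1)) * η * Real.log η * (1 - η ^ ((γ+1)⁻¹ : ℝ)) ^ γ
        + η / (1 - η ^ ((γ+1)⁻¹ : ℝ)) := by
  obtain ⟨hη0, hη1⟩ := hη
  have hγ1 : (0:ℝ) < γ + 1 := by linarith
  set w : ℝ := η ^ ((γ+1)⁻¹ : ℝ) with hw
  have hw0 : 0 < w := Real.rpow_pos_of_pos hη0 _
  have hw1 : w < 1 := Real.rpow_lt_one hη0.le hη1 (by positivity)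
  have h1w : 0 < 1 - w := by linarith
  have step1 : focalBayesRisk γ η ≤ focalPointwiseRisk γ η w :=
    csInf_le (focal_bddBelow hη0.le hη1.le) ⟨w, ⟨hw0, hw1⟩, rfl⟩
  have hlogw : Real.log w = (γ+1)⁻¹ * Real.log η := Real.log_rpow hη0 _
  have hwγ : w ^ ((γ:ℝ)+1) = η := by
    rw [hw, ← Real.rpow_mul hη0.le]
    rw [inv_mul_cancel₀ hγ1.ne', Real.rpow_one]
  -- bound the second term
  have hlog2 : -Real.log (1 - w) ≤ w / (1 - w) := by
    have h := Real.log_le_sub_one_of_pos (show (0:ℝ) < (1-w)⁻¹ by positivity)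
    rw [Real.log_inv] at h
    have : (1-w)⁻¹ - 1 = w / (1-w) := by field_simp; ring
    linarith [this ▸ h]
  have hwγpos : (0:ℝ) ≤ w ^ (γ:ℝ) := Real.rpow_nonneg hw0.le _
  have hlog2' : 0 ≤ -Real.log (1 - w) := by
    have := Real.log_nonpos (by linarith) (by linarith : 1 - w ≤ 1)
    linarith
  have key2 : -(1 - η) * Real.log (1 - w) * w ^ (γ:ℝ) ≤ η / (1 - w) := by
    have c1 : (1 - η) * (-Real.log (1 - w)) * w ^ (γ:ℝ)
        ≤ 1 * (w / (1-w)) * w ^ (γ:ℝ) := by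
      apply mul_le_mul_of_nonneg_right _ hwγpos
      apply mul_le_mul (by linarith) hlog2 hlog2' (by norm_num)
    have c2 : 1 * (w / (1-w)) * w ^ (γ:ℝ) = (w ^ (γ:ℝ) * w) / (1-w) := by ring
    have c3 : w ^ (γ:ℝ) * w = η := by
      rw [Real.rpow_add_one hw0.ne' γ] at hwγ; exact hwγ
    calc -(1 - η) * Real.log (1 - w) * w ^ (γ:ℝ)
        = (1 - η) * (-Real.log (1 - w)) * w ^ (γ:ℝ) := by ring
      _ ≤ 1 * (w / (1-w)) * w ^ (γ:ℝ) := c1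
      _ = (w ^ (γ:ℝ) * w) / (1-w) := c2
      _ = η / (1-w) := by rw [c3]
  have key1 : -η * Real.log w * (1 - w) ^ (γ:ℝ)
      = -(1/(γ+1)) * η * Real.log η * (1 - w) ^ (γ:ℝ) := by
    rw [hlogw]; field_simp
  calc focalBayesRisk γ η ≤ focalPointwiseRisk γ η w := step1
    _ = -η * Real.log w * (1 - w) ^ (γ:ℝ) + (-(1 - η) * Real.log (1 - w) * w ^ (γ:ℝ)) := by
        unfold focalPointwiseRisk; ring
    _ ≤ -(1/(γ+1)) * η * Real.log η * (1 - w) ^ (γ:ℝ) + η / (1 - w) := by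
        rw [key1]; linarith [key2]

lemma tau_pos {η : ℝ} (hη : η ∈ Set.Ioo (0:ℝ) 1) : 0 < -(η * Real.log η) := by
  have := Real.log_neg hη.1 hη.2
  nlinarith [hη.1]

lemma tau_lt_one {η : ℝ} (hη : η ∈ Set.Ioo (0:ℝ) 1) : -(η * Real.log η) < 1 := by
  obtain ⟨h0, h1⟩ := hη
  have h := Real.log_le_sub_one_of_pos (show (0:ℝ) < η⁻¹ by positivity)
  rw [Real.log_inv] at h
  have : -Real.log η ≤ η⁻¹ - 1 := h
  have h2 : η * (-Real.log η) ≤ η * (η⁻¹ - 1) := by nlinarith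
  have h3 : η * (η⁻¹ - 1) = 1 - η := by field_simp
  nlinarith

lemma le_focalBayesRisk {γ η : ℝ} (hγ : 0 < γ) (hη : η ∈ Set.Ioo (0:ℝ) 1) :
    min ((1-η) * (-(η * Real.log η)))
      ((1 - (-(η * Real.log η)) ^ ((γ+1)⁻¹ : ℝ)) ^ γ *
        (η * (-Real.log ((-(η * Real.log η)) ^ ((γ+1)⁻¹ : ℝ)))))
      ≤ focalBayesRisk γ η := by
  obtain ⟨hη0, hη1⟩ := hη
  have hγ1 : (0:ℝ) < γ + 1 := by linarith
  set τ : ℝ := -(η * Real.log η) with hτdef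
  have hτ0 : 0 < τ := tau_pos ⟨hη0, hη1⟩
  have hτ1 : τ < 1 := tau_lt_one ⟨hη0, hη1⟩
  set s : ℝ := τ ^ ((γ+1)⁻¹ : ℝ) with hsdef
  have hs0 : 0 < s := Real.rpow_pos_of_pos hτ0 _
  have hs1 : s < 1 := Real.rpow_lt_one hτ0.le hτ1 (by positivity)
  have hsγ : s ^ ((γ:ℝ)+1) = τ := by
    rw [hsdef, ← Real.rpow_mul hτ0.le, inv_mul_cancel₀ hγ1.ne', Real.rpow_one]
  refine le_csInf ⟨focalPointwiseRisk γ η (1/2), ⟨1/2, by norm_num, rfl⟩⟩ ?_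
  rintro b ⟨v, ⟨hv0, hv1⟩, rfl⟩
  have hvγ : (0:ℝ) ≤ v ^ (γ:ℝ) := Real.rpow_nonneg hv0.le _
  have hlog1v : 0 ≤ -Real.log (1 - v) :=
    neg_nonneg.2 (Real.log_nonpos (by linarith) (by linarith))
  have hter2 : 0 ≤ (1 - η) * (-Real.log (1 - v)) * v ^ (γ:ℝ) :=
    mul_nonneg (mul_nonneg (by linarith) hlog1v) hvγ
  have hter1 : 0 ≤ (η * (-Real.log v)) * (1 - v) ^ (γ:ℝ) :=
    mul_nonneg (mul_nonneg hη0.le (neg_nonneg.2 (Real.log_nonpos hv0.le hv1.le)))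
      (Real.rpow_nonneg (by linarith) _)
  have hrisk : focalPointwiseRisk γ η v
      = (η * (-Real.log v)) * (1 - v) ^ (γ:ℝ)
        + (1 - η) * (-Real.log (1 - v)) * v ^ (γ:ℝ) := by
    unfold focalPointwiseRisk; ring
  rcases lt_or_ge v s with hvs | hsv
  · -- v < s : use the second component of the min
    refine le_trans (min_le_right _ _) ?_
    have hls : 0 ≤ -Real.log s := neg_nonneg.2 (Real.log_nonpos hs0.le hs1.le)
    have hlv : -Real.log s ≤ -Real.log v := by
      have := Real.log_le_log hv0 hvs.le; linarith
    have hp : (1-s) ^ (γ:ℝ) ≤ (1-v) ^ (γ:ℝ) :=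
      Real.rpow_le_rpow (by linarith) (by linarith) hγ.le
    have key : (1-s) ^ (γ:ℝ) * (η * (-Real.log s))
        ≤ (1-v) ^ (γ:ℝ) * (η * (-Real.log v)) := by
      apply mul_le_mul hp (mul_le_mul_of_nonneg_left hlv hη0.le)
        (mul_nonneg hη0.le hls) (Real.rpow_nonneg (by linarith) _)
    rw [hrisk]
    nlinarith
  · -- s ≤ v : use the first component of the min
    refine le_trans (min_le_left _ _) ?_
    have h1 : s ^ ((γ:ℝ)+1) ≤ v ^ ((γ:ℝ)+1) :=
      Real.rpow_le_rpow hs0.le hsv (by positivity)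
    have h2 : v ^ ((γ:ℝ)+1) = v ^ (γ:ℝ) * v := Real.rpow_add_one hv0.ne' _
    have h3 : v ≤ -Real.log (1 - v) := by
      have := Real.log_le_sub_one_of_pos (show (0:ℝ) < 1 - v by linarith)
      linarith
    have c1 : (1-η) * τ ≤ (1-η) * (v ^ (γ:ℝ) * v) := by
      rw [← hsγ, ← h2]; nlinarith
    have c2 : (1-η) * (v ^ (γ:ℝ) * v) ≤ (1 - η) * (-Real.log (1 - v)) * v ^ (γ:ℝ) := by
      nlinarith
    rw [hrisk]
    nlinarith

lemma neg_log_atTop : Tendsto (fun η : ℝ => -Real.log η) (𝓝[>] (0:ℝ)) atTop :=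
  tendsto_neg_atBot_atTop.comp Real.tendsto_log_nhdsGT_zero

lemma log_neg_log_div_log : Tendsto (fun η : ℝ => Real.log (-Real.log η) / Real.log η)
    (𝓝[>] (0:ℝ)) (𝓝 0) := by
  have h := (Real.isLittleO_log_id_atTop.tendsto_div_nhds_zero).comp neg_log_atTop
  have h2 := h.neg
  rw [neg_zero] at h2
  refine h2.congr fun η => ?_
  simp only [Function.comp_apply, id]
  rw [div_neg, neg_neg]

lemma inv_log_zero : Tendsto (fun η : ℝ => (Real.log η)⁻¹) (𝓝[>] (0:ℝ)) (𝓝 0) := by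
  have h := neg_log_atTop.inv_tendsto_atTop.neg
  rw [neg_zero] at h
  refine h.congr fun η => ?_
  simp only [Pi.inv_apply, Pi.neg_apply]
  rw [inv_neg, neg_neg]

lemma tau_tendsto : Tendsto (fun η : ℝ => -(η * Real.log η)) (𝓝[>] (0:ℝ)) (𝓝[>] (0:ℝ)) := by
  rw [tendsto_nhdsWithin_iff]
  constructor
  · have h := (tendsto_log_mul_rpow_nhdsGT_zero (one_pos)).neg
    rw [neg_zero] at h
    refine h.congr fun η => ?_
    rw [Real.rpow_one]; ring
  · filter_upwards [Ioo_mem_nhdsGT_of_mem (Set.left_mem_Ico.2 one_pos)] with η hη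
    exact tau_pos hη

lemma rpow_exp_tendsto_zero {c : ℝ} (hc : 0 < c) :
    Tendsto (fun x : ℝ => x ^ (c : ℝ)) (𝓝[>] (0:ℝ)) (𝓝 0) := by
  have h : ContinuousAt (fun x : ℝ => x ^ (c:ℝ)) 0 :=
    Real.continuousAt_rpow_const 0 c (Or.inr hc.le)
  have h2 := h.tendsto
  rw [Real.zero_rpow hc.ne'] at h2
  exact h2.mono_left nhdsWithin_le_nhds

lemma one_sub_rpow_tendsto_one {γ : ℝ} {f : ℝ → ℝ} {l : Filter ℝ}
    (hf : Tendsto f l (𝓝 0)) :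
    Tendsto (fun x => (1 - f x) ^ (γ:ℝ)) l (𝓝 1) := by
  have h1 : Tendsto (fun x => 1 - f x) l (𝓝 1) := by
    have := (tendsto_const_nhds (x := (1:ℝ)) (f := l)).sub hf
    simpa using this
  have h : ContinuousAt (fun x : ℝ => x ^ (γ:ℝ)) 1 :=
    Real.continuousAt_rpow_const 1 γ (Or.inl one_ne_zero)
  have := h.tendsto.comp h1
  rwa [Real.one_rpow] at this

lemma focal_ratio_tendsto (γ : ℝ) (hγ : 0 < γ) :
    Tendsto (fun η => focalBayesRisk γ η / (-(1/(γ+1)) * η * Real.log η))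
      (𝓝[>] (0:ℝ)) (𝓝 1) := by
  have hγ1 : (0:ℝ) < γ + 1 := by linarith
  set B : ℝ → ℝ := fun η => -(1/(γ+1)) * η * Real.log η with hB
  set loR : ℝ → ℝ := fun η => min ((1-η) * (γ+1))
    ((1 - (-(η * Real.log η)) ^ ((γ+1)⁻¹ : ℝ)) ^ γ *
      (Real.log (-(η * Real.log η)) / Real.log η)) with hloR
  set hiR : ℝ → ℝ := fun η => (1 - η ^ ((γ+1)⁻¹ : ℝ)) ^ γ
    + ((γ+1) * (Real.log η)⁻¹ * (-1)) / (1 - η ^ ((γ+1)⁻¹ : ℝ)) with hhiR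
  have hmem : ∀ᶠ η in 𝓝[>] (0:ℝ), η ∈ Set.Ioo (0:ℝ) 1 :=
    Ioo_mem_nhdsGT_of_mem (Set.left_mem_Ico.2 one_pos)
  -- B is positive and equalities hold on Ioo 0 1
  have hBpos : ∀ η ∈ Set.Ioo (0:ℝ) 1, 0 < B η := by
    intro η hη
    have hl : Real.log η < 0 := Real.log_neg hη.1 hη.2
    have : B η = (1/(γ+1)) * (η * (-Real.log η)) := by rw [hB]; ring
    rw [this]
    apply mul_pos (by positivity) (mul_pos hη.1 (by linarith))
  have hle : ∀ᶠ η in 𝓝[>] (0:ℝ),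
      loR η ≤ focalBayesRisk γ η / B η := by
    filter_upwards [hmem] with η hη
    have hBp := hBpos η hη
    rw [le_div_iff₀ hBp]
    refine le_trans (le_of_eq ?_) (le_focalBayesRisk hγ hη)
    have hτ0 := tau_pos hη
    have hl : Real.log η ≠ 0 := (Real.log_neg hη.1 hη.2).ne
    have hlogs : Real.log ((-(η * Real.log η)) ^ ((γ+1)⁻¹ : ℝ))
        = (γ+1)⁻¹ * Real.log (-(η * Real.log η)) := Real.log_rpow hτ0 _
    rw [hloR, hB, min_mul_of_nonneg _ _ hBp.le]
    have hgg : (γ+1) * (γ+1)⁻¹ = 1 := mul_inv_cancel₀ hγ1.ne'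
    have hll : Real.log η * (Real.log η)⁻¹ = 1 := mul_inv_cancel₀ hl
    congr 1
    · linear_combination ((1-η) * (-(η * Real.log η))) * hgg
    · rw [hlogs]
      linear_combination (-((1 - (-(η * Real.log η)) ^ ((γ+1)⁻¹:ℝ)) ^ γ) *
        Real.log (-(η * Real.log η)) * η * (γ+1)⁻¹) * hll
  have hge : ∀ᶠ η in 𝓝[>] (0:ℝ),
      focalBayesRisk γ η / B η ≤ hiR η := by
    filter_upwards [hmem] with η hη
    have hBp := hBpos η hη
    rw [div_le_iff₀ hBp]
    refine le_trans (focalBayesRisk_le hγ hη) (le_of_eq ?_)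
    have hl : Real.log η ≠ 0 := (Real.log_neg hη.1 hη.2).ne
    have hw1 : η ^ ((γ+1)⁻¹ : ℝ) < 1 := Real.rpow_lt_one hη.1.le hη.2 (by positivity)
    have h1w : (1:ℝ) - η ^ ((γ+1)⁻¹ : ℝ) ≠ 0 := by linarith
    have hgg : (γ+1) * (γ+1)⁻¹ = 1 := mul_inv_cancel₀ hγ1.ne'
    have hll : Real.log η * (Real.log η)⁻¹ = 1 := mul_inv_cancel₀ hl
    rw [hhiR, hB]
    linear_combination (-(η * (1 - η ^ ((γ+1)⁻¹:ℝ))⁻¹)) * hgg +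
      (-(η * (1 - η ^ ((γ+1)⁻¹:ℝ))⁻¹ * ((γ+1) * (γ+1)⁻¹))) * hll
  -- limits of loR and hiR
  have hloT : Tendsto loR (𝓝[>] (0:ℝ)) (𝓝 1) := by
    have t1 : Tendsto (fun η : ℝ => (1-η) * (γ+1)) (𝓝[>] (0:ℝ)) (𝓝 (γ+1)) := by
      have : Tendsto (fun η : ℝ => 1 - η) (𝓝[>] (0:ℝ)) (𝓝 1) := by
        have := (tendsto_const_nhds (x := (1:ℝ)) (f := 𝓝[>] (0:ℝ))).sub
          (tendsto_id.mono_left nhdsWithin_le_nhds)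
        simpa using this
      simpa using this.mul_const (γ+1)
    have t2a : Tendsto (fun η : ℝ => (1 - (-(η * Real.log η)) ^ ((γ+1)⁻¹ : ℝ)) ^ (γ:ℝ))
        (𝓝[>] (0:ℝ)) (𝓝 1) := by
      apply one_sub_rpow_tendsto_one
      exact ((rpow_exp_tendsto_zero (show (0:ℝ) < (γ+1)⁻¹ by positivity)).comp tau_tendsto)
    have t2b : Tendsto (fun η : ℝ => Real.log (-(η * Real.log η)) / Real.log η)
        (𝓝[>] (0:ℝ)) (𝓝 1) := by
      have heq : ∀ᶠ η in 𝓝[>] (0:ℝ),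
          1 + Real.log (-Real.log η) / Real.log η
            = Real.log (-(η * Real.log η)) / Real.log η := by
        filter_upwards [hmem] with η hη
        have hl : Real.log η < 0 := Real.log_neg hη.1 hη.2
        have : -(η * Real.log η) = η * (-Real.log η) := by ring
        rw [this, Real.log_mul hη.1.ne' (by linarith), add_div,
          div_self hl.ne]
      have := ((tendsto_const_nhds (x := (1:ℝ)) (f := 𝓝[>] (0:ℝ))).add
        log_neg_log_div_log)
      rw [add_zero] at this
      exact Tendsto.congr' heq this
    have := t1.min ((t2a.mul t2b))
    rw [mul_one] at this
    have hmin : min (γ+1) (1:ℝ) = 1 := min_eq_right (by linarith)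
    rw [hloR]
    simpa [hmin] using this
  have hhiT : Tendsto hiR (𝓝[>] (0:ℝ)) (𝓝 1) := by
    have t1 : Tendsto (fun η : ℝ => (1 - η ^ ((γ+1)⁻¹ : ℝ)) ^ (γ:ℝ))
        (𝓝[>] (0:ℝ)) (𝓝 1) :=
      one_sub_rpow_tendsto_one (rpow_exp_tendsto_zero (by positivity))
    have t2 : Tendsto (fun η : ℝ => ((γ+1) * (Real.log η)⁻¹ * (-1)) / (1 - η ^ ((γ+1)⁻¹ : ℝ)))
        (𝓝[>] (0:ℝ)) (𝓝 0) := by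
      have hnum : Tendsto (fun η : ℝ => (γ+1) * (Real.log η)⁻¹ * (-1))
          (𝓝[>] (0:ℝ)) (𝓝 0) := by
        have := (inv_log_zero.const_mul (γ+1)).mul_const (-1)
        simpa using this
      have hden : Tendsto (fun η : ℝ => 1 - η ^ ((γ+1)⁻¹ : ℝ)) (𝓝[>] (0:ℝ)) (𝓝 1) := by
        have := (tendsto_const_nhds (x := (1:ℝ)) (f := 𝓝[>] (0:ℝ))).sub
          (rpow_exp_tendsto_zero (show (0:ℝ) < (γ+1)⁻¹ by positivity))
        simpa using this
      have := hnum.div hden one_ne_zero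
      rw [div_one] at this; exact this
    have := t1.add t2
    rw [add_zero] at this
    exact this
  exact tendsto_of_tendsto_of_tendsto_of_le_of_le' hloT hhiT hle hge

/-- Fix `γ > 0` and `t > 0` with `t ≠ 1`. For the focal loss with parameter
`γ`, `lim_{π→0⁺} f^π(t) / (-(1/(γ+1)) π log(π) (1-t)) = 1`: the function
`-(1/(γ+1)) π log(π) (1-t)` is the f-function of the focal loss under
ultra-imbalanced classification. -/
theorem focal_loss_fFun_UIC (γ t : ℝ) (hγ : 0 < γ) (ht : 0 < t) (ht1 : t ≠ 1) :
    Tendsto (fun π : ℝ =>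
        fFun (focalBayesRisk γ) π t / (-(1 / (γ + 1)) * π * Real.log π * (1 - t)))
      (𝓝[>] (0 : ℝ)) (𝓝 1) := by
  have hγ1 : (0:ℝ) < γ + 1 := by linarith
  have h1t : (1:ℝ) - t ≠ 0 := sub_ne_zero.2 (Ne.symm ht1)
  set q : ℝ → ℝ := fun π => π * t / (π * t + 1 - π) with hq
  have hmem : ∀ᶠ π in 𝓝[>] (0:ℝ), π ∈ Set.Ioo (0:ℝ) 1 :=
    Ioo_mem_nhdsGT_of_mem (Set.left_mem_Ico.2 one_pos)
  have hcpos : ∀ π ∈ Set.Ioo (0:ℝ) 1, 0 < π * t + 1 - π := by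
    intro π hπ
    have h1 : 0 < π * t := mul_pos hπ.1 ht
    have := hπ.2
    linarith
  have hqmem : ∀ π ∈ Set.Ioo (0:ℝ) 1, q π ∈ Set.Ioo (0:ℝ) 1 := by
    intro π hπ
    have hc := hcpos π hπ
    constructor
    · apply div_pos (mul_pos hπ.1 ht) hc
    · rw [div_lt_one hc]; linarith [hπ.2]
  -- q tends to 0 within (0,∞)
  have hcten : Tendsto (fun π : ℝ => π * t + 1 - π) (𝓝[>] (0:ℝ)) (𝓝 1) := by
    have : Tendsto (fun π : ℝ => π * t + 1 - π) (𝓝 (0:ℝ)) (𝓝 1) := by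
      have h := (((continuous_id.mul continuous_const).add continuous_const).sub
        continuous_id).tendsto (0:ℝ) (f := fun π : ℝ => π * t + 1 - π)
      simpa using h
    exact this.mono_left nhdsWithin_le_nhds
  have hqten : Tendsto q (𝓝[>] (0:ℝ)) (𝓝[>] (0:ℝ)) := by
    rw [tendsto_nhdsWithin_iff]
    constructor
    · have hnum : Tendsto (fun π : ℝ => π * t) (𝓝[>] (0:ℝ)) (𝓝 0) := by
        have := (tendsto_id.mul_const t).mono_left
          (nhdsWithin_le_nhds : 𝓝[>] (0:ℝ) ≤ 𝓝 0)
        simpa using this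
      have := hnum.div hcten one_ne_zero
      rw [div_one] at this; exact this
    · filter_upwards [hmem] with π hπ
      exact (hqmem π hπ).1
  -- log q / log π tends to 1
  have hlogc : Tendsto (fun π : ℝ => Real.log (π * t + 1 - π)) (𝓝[>] (0:ℝ)) (𝓝 0) := by
    have h := (Real.continuousAt_log one_ne_zero).tendsto.comp hcten
    rwa [Real.log_one] at h
  have hlr : Tendsto (fun π : ℝ => Real.log (q π) / Real.log π) (𝓝[>] (0:ℝ)) (𝓝 1) := by
    have heq : ∀ᶠ π in 𝓝[>] (0:ℝ),
        1 + (Real.log t - Real.log (π * t + 1 - π)) * (Real.log π)⁻¹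
          = Real.log (q π) / Real.log π := by
      filter_upwards [hmem] with π hπ
      have hc := hcpos π hπ
      have hl : Real.log π ≠ 0 := (Real.log_neg hπ.1 hπ.2).ne
      have hlogq : Real.log (q π)
          = Real.log π + Real.log t - Real.log (π * t + 1 - π) := by
        rw [hq]
        simp only
        rw [Real.log_div (mul_pos hπ.1 ht).ne' hc.ne', Real.log_mul hπ.1.ne' ht.ne']
      rw [hlogq]
      field_simp
      ring
    have hlim : Tendsto (fun π : ℝ =>
        1 + (Real.log t - Real.log (π * t + 1 - π)) * (Real.log π)⁻¹)
        (𝓝[>] (0:ℝ)) (𝓝 1) := by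
      have h1 : Tendsto (fun π : ℝ => Real.log t - Real.log (π * t + 1 - π))
          (𝓝[>] (0:ℝ)) (𝓝 (Real.log t)) := by
        have := (tendsto_const_nhds (x := Real.log t) (f := 𝓝[>] (0:ℝ))).sub hlogc
        simpa using this
      have h2 := h1.mul inv_log_zero
      rw [mul_zero] at h2
      have := (tendsto_const_nhds (x := (1:ℝ)) (f := 𝓝[>] (0:ℝ))).add h2
      simpa using this
    exact hlim.congr' heq
  -- ratios
  have r1 := focal_ratio_tendsto γ hγ
  have r2 := r1.comp hqten
  -- eventual identity
  have heq : ∀ᶠ π in 𝓝[>] (0:ℝ),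
      (focalBayesRisk γ π / (-(1/(γ+1)) * π * Real.log π)) * (1-t)⁻¹
        - (focalBayesRisk γ (q π) / (-(1/(γ+1)) * (q π) * Real.log (q π)))
          * (t * (Real.log (q π) / Real.log π) * (1-t)⁻¹)
      = fFun (focalBayesRisk γ) π t / (-(1 / (γ + 1)) * π * Real.log π * (1 - t)) := by
    filter_upwards [hmem] with π hπ
    have hc := hcpos π hπ
    have hqm := hqmem π hπ
    have hlπ : Real.log π ≠ 0 := (Real.log_neg hπ.1 hπ.2).ne
    have hlq : Real.log (q π) ≠ 0 := (Real.log_neg hqm.1 hqm.2).ne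
    have hG : (γ:ℝ) + 1 ≠ 0 := hγ1.ne'
    have hBπ : -(1/(γ+1)) * π * Real.log π ≠ 0 := by
      apply mul_ne_zero (mul_ne_zero (neg_ne_zero.2 (one_div_ne_zero hG)) hπ.1.ne') hlπ
    have hD : -(1/(γ+1)) * π * Real.log π * (1-t) ≠ 0 := mul_ne_zero hBπ h1t
    have hBq : -(1/(γ+1)) * (q π) * Real.log (q π) ≠ 0 := by
      apply mul_ne_zero (mul_ne_zero (neg_ne_zero.2 (one_div_ne_zero hG)) hqm.1.ne') hlq
    have e1 : focalBayesRisk γ π / (-(1/(γ+1)) * π * Real.log π) * (1-t)⁻¹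
        = focalBayesRisk γ π / (-(1/(γ+1)) * π * Real.log π * (1-t)) := by
      rw [← div_eq_mul_inv, div_div]
    have e2 : (focalBayesRisk γ (q π) / (-(1/(γ+1)) * (q π) * Real.log (q π)))
          * (t * (Real.log (q π) / Real.log π) * (1-t)⁻¹)
        = ((π*t+1-π) * focalBayesRisk γ (q π))
            / (-(1/(γ+1)) * π * Real.log π * (1-t)) := by
      rw [div_mul_eq_mul_div, div_eq_div_iff hBq hD]
      have hqv : q π = π * t / (π * t + 1 - π) := rfl
      rw [hqv]
      field_simp
    rw [e1, e2, div_sub_div_same]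
    simp only [fFun]
    rfl
  -- conclude
  have hfin := ((r1.mul_const ((1-t)⁻¹)).sub
    (r2.mul ((hlr.const_mul t).mul_const ((1-t)⁻¹))))
  have : (1:ℝ) * (1-t)⁻¹ - 1 * (t * 1 * (1-t)⁻¹) = 1 := by
    field_simp
  rw [this] at hfin
  exact hfin.congr' heq
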